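/- Let (X,d) be a metric space, θ=(k_r) a lacunary sequence, and f an unbounded modulus function that is θ-compatible. If a sequence (A_k) in CL(X) is Wijsman θ-lacunary statistically convergent to A ∈ CL(X), then (A_k) is Wijsman θ-lacunary f-statistically convergent to A. -/
import Mathlib


open Filter Metric Set

/-- `f : ℝ → ℝ` is an (unbounded) modulus function (considered on `[0,∞)`):
`f x = 0 ↔ x = 0`, subadditive, increasing, continuous from the right at `0`,
and unbounded. -/
def IsModulus (f : ℝ → ℝ) : Prop :=
  (∀ x ∈ Set.Ici (0:ℝ), 0 ≤ f x) ∧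
  (∀ x ∈ Set.Ici (0:ℝ), (f x = 0 ↔ x = 0)) ∧
  (∀ x ∈ Set.Ici (0:ℝ), ∀ y ∈ Set.Ici (0:ℝ), f (x + y) ≤ f x + f y) ∧
  MonotoneOn f (Set.Ici (0:ℝ)) ∧
  ContinuousWithinAt f (Set.Ici (0:ℝ)) 0 ∧
  (∀ M : ℝ, ∃ x ∈ Set.Ici (0:ℝ), M < f x)

/-- `φ(ε) = limsup_n f(nε)/f(n)`. -/
noncomputable def modPhi (f : ℝ → ℝ) (ε : ℝ) : ℝ :=
  Filter.limsup (fun n : ℕ => f ((n : ℝ) * ε) / f (n : ℝ)) Filter.atTop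

/-- A modulus function is compatible if `φ(ε) → 0` as `ε → 0⁺`. -/
def Compatible (f : ℝ → ℝ) : Prop :=
  Filter.Tendsto (modPhi f) (nhdsWithin 0 (Set.Ioi 0)) (nhds 0)

/-- Wijsman statistical convergence of a sequence of subsets of a metric space. -/
def WijsmanStatConv {X : Type*} [MetricSpace X] (A : ℕ → Set X) (B : Set X) : Prop :=
  ∀ x : X, ∀ ε > (0:ℝ),
    Filter.Tendsto (fun n : ℕ =>
      (((Finset.range n).filter
        (fun j => ε < |infDist x (A j) - infDist x B|)).card : ℝ) / (n : ℝ))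
      Filter.atTop (nhds 0)

/-- Wijsman `f`-statistical convergence of a sequence of subsets of a metric space. -/
def WijsmanFStatConv {X : Type*} [MetricSpace X] (f : ℝ → ℝ) (A : ℕ → Set X)
    (B : Set X) : Prop :=
  ∀ x : X, ∀ ε > (0:ℝ),
    Filter.Tendsto (fun n : ℕ =>
      f ((((Finset.range n).filter
        (fun j => ε < |infDist x (A j) - infDist x B|)).card : ℝ)) / f (n : ℝ))
      Filter.atTop (nhds 0)

/-- A real sequence is `f`-strong Cesàro convergent to `L`. -/
def FStrongCesaro (f : ℝ → ℝ) (x : ℕ → ℝ) (L : ℝ) : Prop :=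
  Filter.Tendsto (fun n : ℕ =>
    f (∑ j ∈ Finset.range n, |x j - L|) / f (n : ℝ)) Filter.atTop (nhds 0)

/-- Wijsman `f`-strong Cesàro convergence. -/
def WijsmanFStrongCesaro {X : Type*} [MetricSpace X] (f : ℝ → ℝ) (A : ℕ → Set X)
    (B : Set X) : Prop :=
  ∀ x : X, FStrongCesaro f (fun j => infDist x (A j)) (infDist x B)

/-- Wijsman strong Cesàro convergence (the case `f = id`). -/
def WijsmanStrongCesaro {X : Type*} [MetricSpace X] (A : ℕ → Set X) (B : Set X) : Prop :=
  ∀ x : X,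
    Filter.Tendsto (fun n : ℕ =>
      (∑ j ∈ Finset.range n, |infDist x (A j) - infDist x B|) / (n : ℝ))
      Filter.atTop (nhds 0)

/-- A real sequence is uniformly integrable. -/
def UnifIntegrable (x : ℕ → ℝ) : Prop :=
  Filter.Tendsto (fun c : ℝ =>
    ⨆ n : ℕ, (∑ j ∈ Finset.range n, if c ≤ |x j| then |x j| else 0) / (n : ℝ))
    Filter.atTop (nhds 0)

/-- Wijsman uniform integrability. -/
def WijsmanUnifIntegrable {X : Type*} [MetricSpace X] (A : ℕ → Set X) : Prop :=
  ∀ x : X, UnifIntegrable (fun j => infDist x (A j))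

/-- A lacunary sequence: strictly increasing, starting at `0`,
with gaps `h_r = k_{r+1} - k_r → ∞`. -/
def IsLacunary (k : ℕ → ℕ) : Prop :=
  k 0 = 0 ∧ StrictMono k ∧
    Filter.Tendsto (fun r : ℕ => k (r + 1) - k r) Filter.atTop Filter.atTop

/-- The gaps `h_r` of a lacunary sequence. -/
def lacH (k : ℕ → ℕ) (r : ℕ) : ℕ := k (r + 1) - k r

/-- The blocks `I_r = (k_r, k_{r+1}]` of a lacunary sequence. -/
def lacI (k : ℕ → ℕ) (r : ℕ) : Finset ℕ := Finset.Ioc (k r) (k (r + 1))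

/-- `φ_θ(ε) = limsup_t f(h_t ε)/f(h_t)`. -/
noncomputable def modPhiTheta (f : ℝ → ℝ) (k : ℕ → ℕ) (ε : ℝ) : ℝ :=
  Filter.limsup (fun t : ℕ => f ((lacH k t : ℝ) * ε) / f ((lacH k t : ℝ))) Filter.atTop

/-- `f` is `θ`-compatible if `φ_θ(ε) → 0` as `ε → 0⁺`. -/
def ThetaCompatible (f : ℝ → ℝ) (k : ℕ → ℕ) : Prop :=
  Filter.Tendsto (modPhiTheta f k) (nhdsWithin 0 (Set.Ioi 0)) (nhds 0)

/-- Wijsman `θ`-lacunary statistical convergence. -/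
def WijsmanLacStatConv {X : Type*} [MetricSpace X] (k : ℕ → ℕ) (A : ℕ → Set X)
    (B : Set X) : Prop :=
  ∀ x : X, ∀ ε > (0:ℝ),
    Filter.Tendsto (fun r : ℕ =>
      (((lacI k r).filter
        (fun j => ε < |infDist x (A j) - infDist x B|)).card : ℝ) / (lacH k r : ℝ))
      Filter.atTop (nhds 0)

/-- Wijsman `θ`-lacunary `f`-statistical convergence. -/
def WijsmanLacFStatConv {X : Type*} [MetricSpace X] (f : ℝ → ℝ) (k : ℕ → ℕ)
    (A : ℕ → Set X) (B : Set X) : Prop :=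
  ∀ x : X, ∀ ε > (0:ℝ),
    Filter.Tendsto (fun r : ℕ =>
      f ((((lacI k r).filter
        (fun j => ε < |infDist x (A j) - infDist x B|)).card : ℝ)) / f ((lacH k r : ℝ)))
      Filter.atTop (nhds 0)

/-- Wijsman `θ`-lacunary `f`-strong Cesàro convergence. -/
def WijsmanLacFStrongCesaro {X : Type*} [MetricSpace X] (f : ℝ → ℝ) (k : ℕ → ℕ)
    (A : ℕ → Set X) (B : Set X) : Prop :=
  ∀ x : X,
    Filter.Tendsto (fun r : ℕ =>
      f (∑ j ∈ lacI k r, |infDist x (A j) - infDist x B|) / f ((lacH k r : ℝ)))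
      Filter.atTop (nhds 0)

/-- Wijsman `θ`-lacunary strong Cesàro convergence (the case `f = id`). -/
def WijsmanLacStrongCesaro {X : Type*} [MetricSpace X] (k : ℕ → ℕ)
    (A : ℕ → Set X) (B : Set X) : Prop :=
  ∀ x : X,
    Filter.Tendsto (fun r : ℕ =>
      (∑ j ∈ lacI k r, |infDist x (A j) - infDist x B|) / (lacH k r : ℝ))
      Filter.atTop (nhds 0)

/-- A real sequence is `θ`-lacunary uniformly integrable. -/
def LacUnifIntegrable (k : ℕ → ℕ) (x : ℕ → ℝ) : Prop :=
  Filter.Tendsto (fun M : ℝ =>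
    ⨆ t : ℕ, (∑ j ∈ lacI k t, if M ≤ |x j| then |x j| else 0) / (lacH k t : ℝ))
    Filter.atTop (nhds 0)

/-- Wijsman `θ`-lacunary uniform integrability. -/
def WijsmanLacUnifIntegrable {X : Type*} [MetricSpace X] (k : ℕ → ℕ)
    (A : ℕ → Set X) : Prop :=
  ∀ x : X, LacUnifIntegrable k (fun j => infDist x (A j))


theorem wijsman_lac_stat_imp_lac_fstat_of_thetaCompatible {X : Type*}
    [MetricSpace X] (k : ℕ → ℕ) (hk : IsLacunary k)
    (f : ℝ → ℝ) (hf : IsModulus f) (hfc : ThetaCompatible f k)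
    (A : ℕ → Set X) (B : Set X)
    (hA : ∀ n, (A n).Nonempty ∧ IsClosed (A n)) (hB : B.Nonempty ∧ IsClosed B)
    (h : WijsmanLacStatConv k A B) : WijsmanLacFStatConv f k A B := by
  intro x ε₀ hε₀
  obtain ⟨hf0, hfz, hfsub, hfmono, hfcont, hfub⟩ := hf
  have hf00 : f 0 = 0 := (hfz 0 (Set.mem_Ici.mpr le_rfl)).mpr rfl
  rw [NormedAddCommGroup.tendsto_nhds_zero]
  intro δ hδ
  -- choose ε ∈ (0,1) with φ_θ(ε) < δ
  have hev : ∀ᶠ ε in nhdsWithin (0:ℝ) (Set.Ioi 0),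
      modPhiTheta f k ε < δ ∧ ε < 1 ∧ ε ∈ Set.Ioi (0:ℝ) := by
    filter_upwards [hfc.eventually (gt_mem_nhds hδ),
      eventually_nhdsWithin_of_eventually_nhds (gt_mem_nhds (by norm_num : (0:ℝ) < 1)),
      self_mem_nhdsWithin] with ε h1 h2 h3
    exact ⟨h1, h2, h3⟩
  obtain ⟨ε, hφ, hε1, hεpos⟩ := hev.exists
  have hεpos : 0 < ε := hεpos
  -- positivity of f at positive naturals
  have hfpos : ∀ n : ℕ, n ≠ 0 → 0 < f (n : ℝ) := by
    intro n hn
    refine lt_of_le_of_ne (hf0 _ (Set.mem_Ici.mpr (by positivity))) (Ne.symm fun hcon => hn ?_)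
    exact_mod_cast (hfz (n : ℝ) (Set.mem_Ici.mpr (by positivity))).mp hcon
  -- boundedness of the ratio sequence
  have hbdd : Filter.IsBoundedUnder (· ≤ ·) Filter.atTop
      (fun t : ℕ => f ((lacH k t : ℝ) * ε) / f ((lacH k t : ℝ))) := by
    refine isBoundedUnder_of ⟨1, fun t => ?_⟩
    by_cases h0 : lacH k t = 0
    · simp [h0, hf00]
    · have h1 : (0:ℝ) < (lacH k t : ℝ) := by
        exact_mod_cast Nat.pos_of_ne_zero h0
      have hle : f ((lacH k t : ℝ) * ε) ≤ f ((lacH k t : ℝ)) := by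
        refine hfmono (Set.mem_Ici.mpr (by positivity)) (Set.mem_Ici.mpr h1.le) ?_
        nlinarith
      exact div_le_one_of_le₀ hle (hfpos _ h0).le
  have hφ' : Filter.limsup
      (fun t : ℕ => f ((lacH k t : ℝ) * ε) / f ((lacH k t : ℝ))) Filter.atTop < δ := hφ
  have hevlt := Filter.eventually_lt_of_limsup_lt hφ' hbdd
  have hsmall := (h x ε₀ hε₀).eventually (gt_mem_nhds hεpos)
  have hH : ∀ᶠ r in Filter.atTop, 1 ≤ lacH k r := hk.2.2.eventually_ge_atTop 1
  filter_upwards [hevlt, hsmall, hH] with r h1r h2r h3r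
  set c : ℕ := ((lacI k r).filter
    (fun j => ε₀ < |infDist x (A j) - infDist x B|)).card with hc
  have hHpos : (0:ℝ) < (lacH k r : ℝ) := by exact_mod_cast h3r
  have hHne : lacH k r ≠ 0 := by omega
  have hcle : (c : ℝ) ≤ (lacH k r : ℝ) * ε := by
    have := (div_lt_iff₀ hHpos).mp h2r
    linarith [mul_comm ε ((lacH k r : ℝ))]
  have hfcle : f (c : ℝ) ≤ f ((lacH k r : ℝ) * ε) :=
    hfmono (Set.mem_Ici.mpr (by positivity)) (Set.mem_Ici.mpr (by positivity)) hcle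
  have hratio : f (c : ℝ) / f ((lacH k r : ℝ)) ≤
      f ((lacH k r : ℝ) * ε) / f ((lacH k r : ℝ)) :=
    (div_le_div_iff_of_pos_right (hfpos _ hHne)).mpr hfcle
  have hnonneg : 0 ≤ f (c : ℝ) / f ((lacH k r : ℝ)) :=
    div_nonneg (hf0 _ (Set.mem_Ici.mpr (by positivity))) (hfpos _ hHne).le
  rw [Real.norm_eq_abs, abs_of_nonneg hnonneg]
  exact lt_of_le_of_lt hratio h1r
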